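/- The function ratio r(t) = √(1 − √t) / (1 − t) satisfies lim_{t → 1⁻} r(t) = ∞. Consequently, on D_τ(ℂ²) with x = (1,0) and y = (t, 1−t), the ratio d_B^τ(x,y) / d_{L^B}^τ(x,y) = √(1 − √t)/(1 − t) is unbounded as t → 1⁻, so the Bures metric and the quantum metric d_{L^B}^τ are not metric (bi-Lipschitz) equivalent on D_τ(ℂ²). -/
import Mathlib


open Filter Topology ComplexOrder

/-- The trace `τ(x) = x₁ + x₂` on `ℂ²`. -/
noncomputable def tauC2 (x : ℂ × ℂ) : ℂ := x.1 + x.2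

/-- The Bures distance on the density space of `ℂ²` with respect to `τ(x) = x₁ + x₂`:
`d_B^τ(x,y) = √(1 − τ(|√x √y|))`, where `√` is the CFC square root and `|a| = √(a⋆a)`. -/
noncomputable def buresC2 (x y : ℂ × ℂ) : ℝ :=
  Real.sqrt (1 - (tauC2 (CFC.sqrt
    (star (CFC.sqrt x * CFC.sqrt y) * (CFC.sqrt x * CFC.sqrt y)))).re)

lemma sqrtProdC2 (s u : ℝ) (hs : 0 ≤ s) (hu : 0 ≤ u) :
    CFC.sqrt (((s:ℂ)), ((u:ℂ))) = ((Real.sqrt s : ℂ), (Real.sqrt u : ℂ)) := by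
  apply CFC.sqrt_unique
  · rw [Prod.mk_mul_mk, Prod.mk.injEq]
    constructor <;> rw [← Complex.ofReal_mul] <;> norm_cast
    exacts [Real.mul_self_sqrt hs, Real.mul_self_sqrt hu]
  · rw [Prod.mk_le_mk]
    constructor <;> simp [Complex.zero_le_real, Real.sqrt_nonneg]

lemma buresC2_val (t : ℝ) (h0 : 0 ≤ t) (h1 : t ≤ 1) :
    buresC2 ((1:ℂ), (0:ℂ)) ((t:ℂ), 1 - (t:ℂ)) = Real.sqrt (1 - Real.sqrt t) := by
  have e1 : CFC.sqrt ((1:ℂ), (0:ℂ)) = ((1:ℂ), (0:ℂ)) := by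
    have := sqrtProdC2 1 0 zero_le_one le_rfl
    simpa using this
  have hy : ((t:ℂ), 1 - (t:ℂ)) = (((t:ℝ):ℂ), ((1 - t : ℝ):ℂ)) := by push_cast; ring_nf
  have e2 : CFC.sqrt ((t:ℂ), 1 - (t:ℂ))
      = ((Real.sqrt t : ℂ), (Real.sqrt (1 - t) : ℂ)) := by
    rw [hy, sqrtProdC2 t (1 - t) h0 (by linarith)]
  unfold buresC2 tauC2
  rw [e1, e2]
  have e3 : star (((1:ℂ), (0:ℂ)) * ((Real.sqrt t : ℂ), (Real.sqrt (1 - t) : ℂ)))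
      * (((1:ℂ), (0:ℂ)) * ((Real.sqrt t : ℂ), (Real.sqrt (1 - t) : ℂ)))
      = (((t:ℝ):ℂ), ((0:ℝ):ℂ)) := by
    rw [Prod.mk_mul_mk, Prod.ext_iff]
    refine ⟨?_, by simp⟩
    show star ((1:ℂ) * (Real.sqrt t : ℂ)) * ((1:ℂ) * (Real.sqrt t : ℂ)) = _
    rw [one_mul, Complex.star_def, Complex.conj_ofReal, ← Complex.ofReal_mul,
      Real.mul_self_sqrt h0]
  rw [e3, sqrtProdC2 t 0 h0 le_rfl]
  simp

theorem bures_quantum_not_metric_equivalent_C2 :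
    Tendsto (fun t : ℝ => Real.sqrt (1 - Real.sqrt t) / (1 - t)) (nhdsWithin 1 (Set.Iio 1))
      atTop
    ∧ ¬ ∃ α β : ℝ, 0 < α ∧ 0 < β ∧
        ∀ x y : ℂ × ℂ, 0 ≤ x.1 → 0 ≤ x.2 → x.1 + x.2 = 1 →
          0 ≤ y.1 → 0 ≤ y.2 → y.1 + y.2 = 1 →
          α * ‖x.1 - y.1‖ ≤ buresC2 x y ∧ buresC2 x y ≤ β * ‖x.1 - y.1‖ := by
  have hmem : Set.Ioo (0:ℝ) 1 ∈ nhdsWithin 1 (Set.Iio 1) := by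
    rw [← Set.Ioi_inter_Iio]
    exact Filter.inter_mem (mem_nhdsWithin_of_mem_nhds (Ioi_mem_nhds one_pos))
      self_mem_nhdsWithin
  have hsqrt_lt : ∀ t : ℝ, t < 1 → Real.sqrt t < 1 := by
    intro t ht
    rcases le_or_gt t 0 with h | h
    · simpa [Real.sqrt_eq_zero' ] using Real.sqrt_le_sqrt h |>.trans_lt (by simp)
    · calc Real.sqrt t < Real.sqrt 1 := Real.sqrt_lt_sqrt h.le ht
        _ = 1 := Real.sqrt_one
  have key : Tendsto (fun t : ℝ => Real.sqrt (1 - Real.sqrt t) / (1 - t))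
      (nhdsWithin 1 (Set.Iio 1)) atTop := by
    have h1 : Tendsto (fun t : ℝ => 2 * Real.sqrt (1 - Real.sqrt t))
        (nhdsWithin 1 (Set.Iio 1)) (nhdsWithin 0 (Set.Ioi 0)) := by
      rw [tendsto_nhdsWithin_iff]
      constructor
      · have hc : Continuous fun t : ℝ => 2 * Real.sqrt (1 - Real.sqrt t) := by
          continuity
        have := hc.tendsto 1
        simp only [Real.sqrt_one, sub_self, Real.sqrt_zero, mul_zero] at this
        exact this.mono_left nhdsWithin_le_nhds
      · filter_upwards [self_mem_nhdsWithin] with t ht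
        have : Real.sqrt t < 1 := hsqrt_lt t ht
        have : 0 < Real.sqrt (1 - Real.sqrt t) := Real.sqrt_pos.mpr (by linarith)
        simp only [Set.mem_Ioi]
        linarith
    have h2 : Tendsto (fun t : ℝ => (2 * Real.sqrt (1 - Real.sqrt t))⁻¹)
        (nhdsWithin 1 (Set.Iio 1)) atTop := tendsto_inv_nhdsGT_zero.comp h1
    refine tendsto_atTop_mono' _ ?_ h2
    filter_upwards [hmem] with t ht
    have hs1 : Real.sqrt t < 1 := hsqrt_lt t ht.2
    set s := Real.sqrt (1 - Real.sqrt t) with hs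
    have hspos : 0 < s := Real.sqrt_pos.mpr (by linarith)
    have hss : s * s = 1 - Real.sqrt t := Real.mul_self_sqrt (by linarith)
    have htt : Real.sqrt t * Real.sqrt t = t := Real.mul_self_sqrt ht.1.le
    have hd : (0:ℝ) < 1 - t := by linarith [ht.2]
    rw [le_div_iff₀ hd, inv_mul_le_iff₀ (by linarith)]
    nlinarith [Real.sqrt_nonneg t, sq_nonneg (1 - Real.sqrt t)]
  refine ⟨key, ?_⟩
  rintro ⟨α, β, hα, hβ, h⟩
  have hev : ∀ᶠ t in nhdsWithin (1:ℝ) (Set.Iio 1),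
      β < Real.sqrt (1 - Real.sqrt t) / (1 - t) := key.eventually_gt_atTop β
  obtain ⟨t, hlt, ht01⟩ := (hev.and (eventually_of_mem hmem fun x hx => hx)).exists
  -- apply h to x = (1,0), y = (t, 1-t)
  have h0t : (0:ℂ) ≤ (t:ℂ) := Complex.zero_le_real.mpr ht01.1.le
  have h1t : (0:ℂ) ≤ 1 - (t:ℂ) := by
    rw [show (1:ℂ) - (t:ℂ) = ((1 - t : ℝ):ℂ) by push_cast; ring]
    exact Complex.zero_le_real.mpr (by linarith [ht01.2])
  have h01 : (0:ℂ) ≤ 1 := by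
    rw [show (1:ℂ) = ((1:ℝ):ℂ) by norm_num, Complex.zero_le_real]; norm_num
  have := h ((1:ℂ), (0:ℂ)) ((t:ℂ), 1 - (t:ℂ)) h01 le_rfl (by norm_num) h0t h1t (by ring)
  have hub := this.2
  rw [buresC2_val t ht01.1.le ht01.2.le] at hub
  have hnorm : ‖((1:ℂ), (0:ℂ)).1 - ((t:ℂ), 1 - (t:ℂ)).1‖ = 1 - t := by
    simp only
    rw [show (1:ℂ) - (t:ℂ) = ((1 - t : ℝ):ℂ) by push_cast; ring, Complex.norm_real,
      Real.norm_eq_abs, abs_of_nonneg (by linarith [ht01.2])]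
  rw [hnorm] at hub
  have hdpos : (0:ℝ) < 1 - t := by linarith [ht01.2]
  rw [lt_div_iff₀ hdpos] at hlt
  linarith
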